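/- Let q_1,...,q_5 ∈ ℝ² be five points not all on one line, with coordinates q_i = (x_i, y_i). Let Δ_{hij} = (q_i − q_h) ∧ (q_j − q_h) denote twice the oriented area of triangle q_h q_i q_j. Suppose Φ, Ψ ∈ ℝ^5 are linearly independent covectors satisfying Σ Φ_i = Σ Φ_i x_i = Σ Φ_i y_i = 0 and Σ Ψ_i = Σ Ψ_i x_i = Σ Ψ_i y_i = 0. Then there exists a nonzero real number a such that for every even permutation (1,2,3,4,5) ↦ (h,i,j,k,l), Δ_{hij} = a(Φ_k Ψ_l − Φ_l Ψ_k). -/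

import Mathlib

open Finset

/-- The planar wedge product `p ∧ q = pₓ q_y − p_y qₓ`. -/
noncomputable def wedge (p q : ℝ × ℝ) : ℝ := p.1 * q.2 - p.2 * q.1

noncomputable def DD (q : Fin 5 → ℝ × ℝ) (a b c : Fin 5) : ℝ := wedge (q b - q a) (q c - q a)

noncomputable def MM (Φ Ψ : Fin 5 → ℝ) (k l : Fin 5) : ℝ := Φ k * Ψ l - Φ l * Ψ k

set_option maxRecDepth 100000 in
lemma exEvenPair : ∀ k l : Fin 5, k ≠ l → ∃ τ : Equiv.Perm (Fin 5), τ.sign = 1 ∧ τ 3 = k ∧ τ 4 = l := by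
  decide

set_option maxRecDepth 100000 in
lemma exEvenTriple : ∀ i j k : Fin 5, i ≠ j → i ≠ k → j ≠ k →
    ∃ σ : Equiv.Perm (Fin 5), σ.sign = 1 ∧ σ 0 = i ∧ σ 1 = j ∧ σ 2 = k := by
  decide

set_option maxRecDepth 1000000 in
lemma evenTuples : ∀ ρ : Equiv.Perm (Fin 5), ρ.sign = 1 →
    (ρ 0, ρ 1, ρ 2, ρ 3, ρ 4) ∈ ([(0,1,2,3,4), (0,1,3,4,2), (0,1,4,2,3), (0,2,1,4,3), (0,2,3,1,4), (0,2,4,3,1), (0,3,1,2,4), (0,3,2,4,1), (0,3,4,1,2), (0,4,1,3,2), (0,4,2,1,3), (0,4,3,2,1), (1,0,2,4,3), (1,0,3,2,4), (1,0,4,3,2), (1,2,0,3,4), (1,2,3,4,0), (1,2,4,0,3), (1,3,0,4,2), (1,3,2,0,4), (1,3,4,2,0), (1,4,0,2,3), (1,4,2,3,0), (1,4,3,0,2), (2,0,1,3,4), (2,0,3,4,1), (2,0,4,1,3), (2,1,0,4,3), (2,1,3,0,4), (2,1,4,3,0), (2,3,0,1,4), (2,3,1,4,0), (2,3,4,0,1),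 (2,4,0,3,1), (2,4,1,0,3), (2,4,3,1,0), (3,0,1,4,2), (3,0,2,1,4), (3,0,4,2,1), (3,1,0,2,4), (3,1,2,4,0), (3,1,4,0,2), (3,2,0,4,1), (3,2,1,0,4), (3,2,4,1,0), (3,4,0,1,2), (3,4,1,2,0), (3,4,2,0,1), (4,0,1,2,3), (4,0,2,3,1), (4,0,3,1,2), (4,1,0,3,2), (4,1,2,0,3), (4,1,3,2,0), (4,2,0,1,3), (4,2,1,3,0), (4,2,3,0,1), (4,3,0,2,1), (4,3,1,0,2), (4,3,2,1,0)] : List (Fin 5 × Fin 5 × Fin 5 × Fin 5 × Fin 5)) := by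
  decide

lemma sumP (q : Fin 5 → ℝ × ℝ) (Φ : Fin 5 → ℝ) (h1 : ∑ i, Φ i = 0)
    (hx : ∑ i, Φ i * (q i).1 = 0) (hy : ∑ i, Φ i * (q i).2 = 0) (i j : Fin 5) :
    ∑ m, Φ m * DD q m i j = 0 := by
  simp only [Fin.sum_univ_five] at h1 hx hy ⊢
  simp only [DD, wedge, Prod.fst_sub, Prod.snd_sub]
  linear_combination ((q i).1 * (q j).2 - (q j).1 * (q i).2) * h1 + ((q i).2 - (q j).2) * hx
    + ((q j).1 - (q i).1) * hy

lemma sum1t (Φ : Fin 5 → ℝ) (h1 : ∑ i, Φ i = 0) (τ : Equiv.Perm (Fin 5)) :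
    Φ (τ 0) + Φ (τ 1) + Φ (τ 2) + Φ (τ 3) + Φ (τ 4) = 0 := by
  have h := (Equiv.sum_comp τ Φ).trans h1
  simpa [Fin.sum_univ_five] using h

section Lems

variable {q : Fin 5 → ℝ × ℝ} {Φ Ψ : Fin 5 → ℝ}

lemma pullP (hP : ∀ i j : Fin 5, ∑ m, Φ m * DD q m i j = 0) (τ : Equiv.Perm (Fin 5)) (i j : Fin 5) :
    Φ (τ 0) * DD q (τ 0) i j + Φ (τ 1) * DD q (τ 1) i j + Φ (τ 2) * DD q (τ 2) i j
      + Φ (τ 3) * DD q (τ 3) i j + Φ (τ 4) * DD q (τ 4) i j = 0 := by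
  have h := (Equiv.sum_comp τ (fun m => Φ m * DD q m i j)).trans (hP i j)
  simpa [Fin.sum_univ_five] using h

lemma L04 (hP : ∀ i j : Fin 5, ∑ m, Φ m * DD q m i j = 0)
    (hQ : ∀ i j : Fin 5, ∑ m, Ψ m * DD q m i j = 0) (τ : Equiv.Perm (Fin 5)) :
    DD q (τ 1) (τ 3) (τ 2) * MM Φ Ψ (τ 3) (τ 4) = DD q (τ 0) (τ 1) (τ 2) * MM Φ Ψ (τ 0) (τ 4) := by
  have p1 := pullP hP τ (τ 1) (τ 2)
  have q1 := pullP hQ τ (τ 1) (τ 2)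
  simp only [DD, MM, wedge, Prod.fst_sub, Prod.snd_sub] at p1 q1 ⊢
  linear_combination (-Ψ (τ 4)) * p1 + (Φ (τ 4)) * q1

lemma L14 (hP : ∀ i j : Fin 5, ∑ m, Φ m * DD q m i j = 0)
    (hQ : ∀ i j : Fin 5, ∑ m, Ψ m * DD q m i j = 0) (τ : Equiv.Perm (Fin 5)) :
    DD q (τ 3) (τ 0) (τ 2) * MM Φ Ψ (τ 3) (τ 4) = DD q (τ 0) (τ 1) (τ 2) * MM Φ Ψ (τ 1) (τ 4) := by
  have p1 := pullP hP τ (τ 0) (τ 2)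
  have q1 := pullP hQ τ (τ 0) (τ 2)
  simp only [DD, MM, wedge, Prod.fst_sub, Prod.snd_sub] at p1 q1 ⊢
  linear_combination (Ψ (τ 4)) * p1 + (-Φ (τ 4)) * q1

lemma L24 (hP : ∀ i j : Fin 5, ∑ m, Φ m * DD q m i j = 0)
    (hQ : ∀ i j : Fin 5, ∑ m, Ψ m * DD q m i j = 0) (τ : Equiv.Perm (Fin 5)) :
    DD q (τ 0) (τ 3) (τ 1) * MM Φ Ψ (τ 3) (τ 4) = DD q (τ 0) (τ 1) (τ 2) * MM Φ Ψ (τ 2) (τ 4) := by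
  have p1 := pullP hP τ (τ 0) (τ 1)
  have q1 := pullP hQ τ (τ 0) (τ 1)
  simp only [DD, MM, wedge, Prod.fst_sub, Prod.snd_sub] at p1 q1 ⊢
  linear_combination (-Ψ (τ 4)) * p1 + (Φ (τ 4)) * q1

lemma L03 (hP : ∀ i j : Fin 5, ∑ m, Φ m * DD q m i j = 0)
    (hQ : ∀ i j : Fin 5, ∑ m, Ψ m * DD q m i j = 0) (τ : Equiv.Perm (Fin 5)) :
    DD q (τ 4) (τ 1) (τ 2) * MM Φ Ψ (τ 3) (τ 4) = DD q (τ 0) (τ 1) (τ 2) * MM Φ Ψ (τ 0) (τ 3) := by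
  have p1 := pullP hP τ (τ 1) (τ 2)
  have q1 := pullP hQ τ (τ 1) (τ 2)
  simp only [DD, MM, wedge, Prod.fst_sub, Prod.snd_sub] at p1 q1 ⊢
  linear_combination (-Ψ (τ 3)) * p1 + (Φ (τ 3)) * q1

lemma L13 (hP : ∀ i j : Fin 5, ∑ m, Φ m * DD q m i j = 0)
    (hQ : ∀ i j : Fin 5, ∑ m, Ψ m * DD q m i j = 0) (τ : Equiv.Perm (Fin 5)) :
    DD q (τ 0) (τ 4) (τ 2) * MM Φ Ψ (τ 3) (τ 4) = DD q (τ 0) (τ 1) (τ 2) * MM Φ Ψ (τ 1) (τ 3) := by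
  have p1 := pullP hP τ (τ 0) (τ 2)
  have q1 := pullP hQ τ (τ 0) (τ 2)
  simp only [DD, MM, wedge, Prod.fst_sub, Prod.snd_sub] at p1 q1 ⊢
  linear_combination (Ψ (τ 3)) * p1 + (-Φ (τ 3)) * q1

lemma L23 (hP : ∀ i j : Fin 5, ∑ m, Φ m * DD q m i j = 0)
    (hQ : ∀ i j : Fin 5, ∑ m, Ψ m * DD q m i j = 0) (τ : Equiv.Perm (Fin 5)) :
    DD q (τ 4) (τ 0) (τ 1) * MM Φ Ψ (τ 3) (τ 4) = DD q (τ 0) (τ 1) (τ 2) * MM Φ Ψ (τ 2) (τ 3) := by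
  have p1 := pullP hP τ (τ 0) (τ 1)
  have q1 := pullP hQ τ (τ 0) (τ 1)
  simp only [DD, MM, wedge, Prod.fst_sub, Prod.snd_sub] at p1 q1 ⊢
  linear_combination (-Ψ (τ 3)) * p1 + (Φ (τ 3)) * q1

lemma L01 (hP : ∀ i j : Fin 5, ∑ m, Φ m * DD q m i j = 0)
    (hQ : ∀ i j : Fin 5, ∑ m, Ψ m * DD q m i j = 0) (hΦ1 : ∑ i, Φ i = 0) (hΨ1 : ∑ i, Ψ i = 0) (τ : Equiv.Perm (Fin 5))
    (hM : MM Φ Ψ (τ 3) (τ 4) ≠ 0) :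
    DD q (τ 2) (τ 3) (τ 4) * MM Φ Ψ (τ 3) (τ 4) = DD q (τ 0) (τ 1) (τ 2) * MM Φ Ψ (τ 0) (τ 1) := by
  by_cases h04 : MM Φ Ψ (τ 0) (τ 4) = 0
  · by_cases h14 : MM Φ Ψ (τ 1) (τ 4) = 0
    · by_cases h03 : MM Φ Ψ (τ 0) (τ 3) = 0
      · by_cases h13 : MM Φ Ψ (τ 1) (τ 3) = 0
        · -- fallback : Φ, Ψ vanish at τ 0, τ 1
          have f0 : Φ (τ 0) = 0 := by
            have h : Φ (τ 0) * MM Φ Ψ (τ 3) (τ 4) = 0 := by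
              simp only [MM] at h04 h03 ⊢
              linear_combination Φ (τ 3) * h04 - Φ (τ 4) * h03
            exact (mul_eq_zero.mp h).resolve_right hM
          have g0 : Ψ (τ 0) = 0 := by
            have h : Ψ (τ 0) * MM Φ Ψ (τ 3) (τ 4) = 0 := by
              simp only [MM] at h04 h03 ⊢
              linear_combination Ψ (τ 3) * h04 - Ψ (τ 4) * h03
            exact (mul_eq_zero.mp h).resolve_right hM
          have f1 : Φ (τ 1) = 0 := by
            have h : Φ (τ 1) * MM Φ Ψ (τ 3) (τ 4) = 0 := by
              simp only [MM] at h14 h13 ⊢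
              linear_combination Φ (τ 3) * h14 - Φ (τ 4) * h13
            exact (mul_eq_zero.mp h).resolve_right hM
          have g1 : Ψ (τ 1) = 0 := by
            have h : Ψ (τ 1) * MM Φ Ψ (τ 3) (τ 4) = 0 := by
              simp only [MM] at h14 h13 ⊢
              linear_combination Ψ (τ 3) * h14 - Ψ (τ 4) * h13
            exact (mul_eq_zero.mp h).resolve_right hM
          have hphi2 : Φ (τ 2) * DD q (τ 2) (τ 3) (τ 4) = 0 := by
            have p34 := pullP hP τ (τ 3) (τ 4)
            simp only [DD, wedge, Prod.fst_sub, Prod.snd_sub] at p34 ⊢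
            linear_combination p34
              - (((q (τ 3)).1 - (q (τ 0)).1) * ((q (τ 4)).2 - (q (τ 0)).2)
                - ((q (τ 3)).2 - (q (τ 0)).2) * ((q (τ 4)).1 - (q (τ 0)).1)) * f0
              - (((q (τ 3)).1 - (q (τ 1)).1) * ((q (τ 4)).2 - (q (τ 1)).2)
                - ((q (τ 3)).2 - (q (τ 1)).2) * ((q (τ 4)).1 - (q (τ 1)).1)) * f1
          have hpsi2 : Ψ (τ 2) * DD q (τ 2) (τ 3) (τ 4) = 0 := by
            have p34 := pullP hQ τ (τ 3) (τ 4)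
            simp only [DD, wedge, Prod.fst_sub, Prod.snd_sub] at p34 ⊢
            linear_combination p34
              - (((q (τ 3)).1 - (q (τ 0)).1) * ((q (τ 4)).2 - (q (τ 0)).2)
                - ((q (τ 3)).2 - (q (τ 0)).2) * ((q (τ 4)).1 - (q (τ 0)).1)) * g0
              - (((q (τ 3)).1 - (q (τ 1)).1) * ((q (τ 4)).2 - (q (τ 1)).2)
                - ((q (τ 3)).2 - (q (τ 1)).2) * ((q (τ 4)).1 - (q (τ 1)).1)) * g1
          by_cases hd : DD q (τ 2) (τ 3) (τ 4) = 0
          · have hM01 : MM Φ Ψ (τ 0) (τ 1) = 0 := by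
              simp only [MM]; rw [f0, g0]; ring
            rw [hd, hM01]; ring
          · exfalso
            have f2 : Φ (τ 2) = 0 := (mul_eq_zero.mp hphi2).resolve_right hd
            have g2 : Ψ (τ 2) = 0 := (mul_eq_zero.mp hpsi2).resolve_right hd
            have e1 := sum1t Φ hΦ1 τ
            have e2 := sum1t Ψ hΨ1 τ
            apply hM
            simp only [MM]
            linear_combination Φ (τ 3) * e2 - Ψ (τ 3) * e1 - Φ (τ 3) * g0 - Φ (τ 3) * g1
              - Φ (τ 3) * g2 + Ψ (τ 3) * f0 + Ψ (τ 3) * f1 + Ψ (τ 3) * f2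
        · -- use pair (1,3)
          apply mul_right_cancel₀ h13
          have p1 := pullP hP τ (τ 0) (τ 2)
          have q1 := pullP hQ τ (τ 0) (τ 2)
          have p2 := pullP hP τ (τ 2) (τ 4)
          have q2 := pullP hQ τ (τ 2) (τ 4)
          simp only [DD, MM, wedge, Prod.fst_sub, Prod.snd_sub] at p1 q1 p2 q2 ⊢
          linear_combination ((Φ (τ 0) * Ψ (τ 1) - Φ (τ 1) * Ψ (τ 0)) * Ψ (τ 3)) * p1
            + (-(Φ (τ 0) * Ψ (τ 1) - Φ (τ 1) * Ψ (τ 0)) * Φ (τ 3)) * q1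
            + ((Φ (τ 3) * Ψ (τ 4) - Φ (τ 4) * Ψ (τ 3)) * Ψ (τ 1)) * p2
            + (-(Φ (τ 3) * Ψ (τ 4) - Φ (τ 4) * Ψ (τ 3)) * Φ (τ 1)) * q2
      · -- use pair (0,3)
        apply mul_right_cancel₀ h03
        have p1 := pullP hP τ (τ 1) (τ 2)
        have q1 := pullP hQ τ (τ 1) (τ 2)
        have p2 := pullP hP τ (τ 2) (τ 4)
        have q2 := pullP hQ τ (τ 2) (τ 4)
        simp only [DD, MM, wedge, Prod.fst_sub, Prod.snd_sub] at p1 q1 p2 q2 ⊢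
        linear_combination (-(Φ (τ 0) * Ψ (τ 1) - Φ (τ 1) * Ψ (τ 0)) * Ψ (τ 3)) * p1
          + ((Φ (τ 0) * Ψ (τ 1) - Φ (τ 1) * Ψ (τ 0)) * Φ (τ 3)) * q1
          + ((Φ (τ 3) * Ψ (τ 4) - Φ (τ 4) * Ψ (τ 3)) * Ψ (τ 0)) * p2
          + (-(Φ (τ 3) * Ψ (τ 4) - Φ (τ 4) * Ψ (τ 3)) * Φ (τ 0)) * q2
    · -- use pair (1,4)
      apply mul_right_cancel₀ h14
      have p1 := pullP hP τ (τ 0) (τ 2)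
      have q1 := pullP hQ τ (τ 0) (τ 2)
      have p2 := pullP hP τ (τ 2) (τ 3)
      have q2 := pullP hQ τ (τ 2) (τ 3)
      simp only [DD, MM, wedge, Prod.fst_sub, Prod.snd_sub] at p1 q1 p2 q2 ⊢
      linear_combination ((Φ (τ 0) * Ψ (τ 1) - Φ (τ 1) * Ψ (τ 0)) * Ψ (τ 4)) * p1
        + (-(Φ (τ 0) * Ψ (τ 1) - Φ (τ 1) * Ψ (τ 0)) * Φ (τ 4)) * q1
        + (-(Φ (τ 3) * Ψ (τ 4) - Φ (τ 4) * Ψ (τ 3)) * Ψ (τ 1)) * p2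
        + ((Φ (τ 3) * Ψ (τ 4) - Φ (τ 4) * Ψ (τ 3)) * Φ (τ 1)) * q2
  · -- use pair (0,4)
    apply mul_right_cancel₀ h04
    have p1 := pullP hP τ (τ 1) (τ 2)
    have q1 := pullP hQ τ (τ 1) (τ 2)
    have p2 := pullP hP τ (τ 2) (τ 3)
    have q2 := pullP hQ τ (τ 2) (τ 3)
    simp only [DD, MM, wedge, Prod.fst_sub, Prod.snd_sub] at p1 q1 p2 q2 ⊢
    linear_combination (-(Φ (τ 0) * Ψ (τ 1) - Φ (τ 1) * Ψ (τ 0)) * Ψ (τ 4)) * p1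
      + ((Φ (τ 0) * Ψ (τ 1) - Φ (τ 1) * Ψ (τ 0)) * Φ (τ 4)) * q1
      + (-(Φ (τ 3) * Ψ (τ 4) - Φ (τ 4) * Ψ (τ 3)) * Ψ (τ 0)) * p2
      + ((Φ (τ 3) * Ψ (τ 4) - Φ (τ 4) * Ψ (τ 3)) * Φ (τ 0)) * q2

lemma L02 (hP : ∀ i j : Fin 5, ∑ m, Φ m * DD q m i j = 0)
    (hQ : ∀ i j : Fin 5, ∑ m, Ψ m * DD q m i j = 0) (hΦ1 : ∑ i, Φ i = 0) (hΨ1 : ∑ i, Ψ i = 0) (τ : Equiv.Perm (Fin 5))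
    (hM : MM Φ Ψ (τ 3) (τ 4) ≠ 0) :
    DD q (τ 3) (τ 1) (τ 4) * MM Φ Ψ (τ 3) (τ 4) = DD q (τ 0) (τ 1) (τ 2) * MM Φ Ψ (τ 0) (τ 2) := by
  have hv0 : (Equiv.swap (1 : Fin 5) 2) 0 = 0 := by decide
  have hv1 : (Equiv.swap (1 : Fin 5) 2) 1 = 2 := by decide
  have hv2 : (Equiv.swap (1 : Fin 5) 2) 2 = 1 := by decide
  have hv3 : (Equiv.swap (1 : Fin 5) 2) 3 = 3 := by decide
  have hv4 : (Equiv.swap (1 : Fin 5) 2) 4 = 4 := by decide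
  have hM' : MM Φ Ψ ((τ * Equiv.swap (1 : Fin 5) 2) 3) ((τ * Equiv.swap (1 : Fin 5) 2) 4) ≠ 0 := by
    simp only [Equiv.Perm.mul_apply, hv3, hv4]; exact hM
  have hh := L01 hP hQ hΦ1 hΨ1 (τ * Equiv.swap (1 : Fin 5) 2) hM'
  simp only [Equiv.Perm.mul_apply, hv0, hv1, hv2, hv3, hv4] at hh
  simp only [DD, MM, wedge, Prod.fst_sub, Prod.snd_sub] at hh ⊢
  linear_combination -hh

lemma L12 (hP : ∀ i j : Fin 5, ∑ m, Φ m * DD q m i j = 0)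
    (hQ : ∀ i j : Fin 5, ∑ m, Ψ m * DD q m i j = 0) (hΦ1 : ∑ i, Φ i = 0) (hΨ1 : ∑ i, Ψ i = 0) (τ : Equiv.Perm (Fin 5))
    (hM : MM Φ Ψ (τ 3) (τ 4) ≠ 0) :
    DD q (τ 0) (τ 3) (τ 4) * MM Φ Ψ (τ 3) (τ 4) = DD q (τ 0) (τ 1) (τ 2) * MM Φ Ψ (τ 1) (τ 2) := by
  have hv0 : (Equiv.swap (0 : Fin 5) 2) 0 = 2 := by decide
  have hv1 : (Equiv.swap (0 : Fin 5) 2) 1 = 1 := by decide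
  have hv2 : (Equiv.swap (0 : Fin 5) 2) 2 = 0 := by decide
  have hv3 : (Equiv.swap (0 : Fin 5) 2) 3 = 3 := by decide
  have hv4 : (Equiv.swap (0 : Fin 5) 2) 4 = 4 := by decide
  have hM' : MM Φ Ψ ((τ * Equiv.swap (0 : Fin 5) 2) 3) ((τ * Equiv.swap (0 : Fin 5) 2) 4) ≠ 0 := by
    simp only [Equiv.Perm.mul_apply, hv3, hv4]; exact hM
  have hh := L01 hP hQ hΦ1 hΨ1 (τ * Equiv.swap (0 : Fin 5) 2) hM'
  simp only [Equiv.Perm.mul_apply, hv0, hv1, hv2, hv3, hv4] at hh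
  simp only [DD, MM, wedge, Prod.fst_sub, Prod.snd_sub] at hh ⊢
  linear_combination hh

end Lems

theorem stmt4 (q : Fin 5 → ℝ × ℝ) (hnc : ¬ Collinear ℝ (Set.range q))
    (Φ Ψ : Fin 5 → ℝ) (hind : LinearIndependent ℝ ![Φ, Ψ])
    (hΦ1 : ∑ i, Φ i = 0) (hΦx : ∑ i, Φ i * (q i).1 = 0) (hΦy : ∑ i, Φ i * (q i).2 = 0)
    (hΨ1 : ∑ i, Ψ i = 0) (hΨx : ∑ i, Ψ i * (q i).1 = 0) (hΨy : ∑ i, Ψ i * (q i).2 = 0) :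
    ∃ a : ℝ, a ≠ 0 ∧ ∀ σ : Equiv.Perm (Fin 5), σ.sign = 1 →
      wedge (q (σ 1) - q (σ 0)) (q (σ 2) - q (σ 0))
        = a * (Φ (σ 3) * Ψ (σ 4) - Φ (σ 4) * Ψ (σ 3)) := by
  have hP : ∀ i j : Fin 5, ∑ m, Φ m * DD q m i j = 0 := sumP q Φ hΦ1 hΦx hΦy
  have hQ : ∀ i j : Fin 5, ∑ m, Ψ m * DD q m i j = 0 := sumP q Ψ hΨ1 hΨx hΨy
  -- some 2x2 minor of (Φ, Ψ) is nonzero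
  have hMex : ∃ k l : Fin 5, MM Φ Ψ k l ≠ 0 := by
    by_contra h
    push_neg at h
    rw [linearIndependent_fin2] at hind
    obtain ⟨hΨ0, hind2⟩ := hind
    obtain ⟨i, hi⟩ : ∃ i, Ψ i ≠ 0 := by
      by_contra h'
      push_neg at h'
      exact hΨ0 (funext h')
    apply hind2 (Φ i / Ψ i)
    funext l
    have hl := h i l
    simp only [MM] at hl
    simp only [Pi.smul_apply, smul_eq_mul]
    field_simp
    simp only [Matrix.cons_val_one, Matrix.cons_val_zero, Matrix.head_cons]
    linarith
  obtain ⟨k, l, hMkl⟩ := hMex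
  have hkl : k ≠ l := by
    rintro rfl
    apply hMkl
    simp only [MM]; ring
  obtain ⟨τ, hτs, hτ3, hτ4⟩ := exEvenPair k l hkl
  have hMτ : MM Φ Ψ (τ 3) (τ 4) ≠ 0 := by rw [hτ3, hτ4]; exact hMkl
  -- the main proportionality
  have main : ∀ σ : Equiv.Perm (Fin 5), σ.sign = 1 →
      DD q (σ 0) (σ 1) (σ 2) * MM Φ Ψ (τ 3) (τ 4)
        = DD q (τ 0) (τ 1) (τ 2) * MM Φ Ψ (σ 3) (σ 4) := by
    intro σ hσ
    have hρs : (τ⁻¹ * σ).sign = 1 := by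
      rw [Equiv.Perm.sign_mul, Equiv.Perm.sign_inv, hτs, hσ]
      rfl
    have e : ∀ i : Fin 5, σ i = τ ((τ⁻¹ * σ) i) := by
      intro i
      rw [Equiv.Perm.mul_apply]; exact (Equiv.apply_symm_apply τ (σ i)).symm
    rw [e 0, e 1, e 2, e 3, e 4]
    set ρ := τ⁻¹ * σ with hρdef
    have hmem := evenTuples ρ hρs
    simp only [List.mem_cons, List.not_mem_nil, or_false] at hmem
    rcases hmem with h|h|h|h|h|h|h|h|h|h|h|h|h|h|h|h|h|h|h|h|h|h|h|h|h|h|h|h|h|h|h|h|h|h|h|h|h|h|h|h|h|h|h|h|h|h|h|h|h|h|h|h|h|h|h|h|h|h|h|h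
    · simp only [Prod.mk.injEq] at h
      obtain ⟨h0, h1, h2, h3, h4⟩ := h
      rw [h0, h1, h2, h3, h4]
      all_goals simp only [DD, MM, wedge, Prod.fst_sub, Prod.snd_sub]; ring
    · simp only [Prod.mk.injEq] at h
      obtain ⟨h0, h1, h2, h3, h4⟩ := h
      rw [h0, h1, h2, h3, h4]
      have hh := L24 hP hQ τ
      simp only [DD, MM, wedge, Prod.fst_sub, Prod.snd_sub] at hh ⊢
      linear_combination (-hh)
    · simp only [Prod.mk.injEq] at h
      obtain ⟨h0, h1, h2, h3, h4⟩ := h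
      rw [h0, h1, h2, h3, h4]
      have hh := L23 hP hQ τ
      simp only [DD, MM, wedge, Prod.fst_sub, Prod.snd_sub] at hh ⊢
      linear_combination hh
    · simp only [Prod.mk.injEq] at h
      obtain ⟨h0, h1, h2, h3, h4⟩ := h
      rw [h0, h1, h2, h3, h4]
      all_goals simp only [DD, MM, wedge, Prod.fst_sub, Prod.snd_sub]; ring
    · simp only [Prod.mk.injEq] at h
      obtain ⟨h0, h1, h2, h3, h4⟩ := h
      rw [h0, h1, h2, h3, h4]
      have hh := L14 hP hQ τ
      simp only [DD, MM, wedge, Prod.fst_sub, Prod.snd_sub] at hh ⊢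
      linear_combination hh
    · simp only [Prod.mk.injEq] at h
      obtain ⟨h0, h1, h2, h3, h4⟩ := h
      rw [h0, h1, h2, h3, h4]
      have hh := L13 hP hQ τ
      simp only [DD, MM, wedge, Prod.fst_sub, Prod.snd_sub] at hh ⊢
      linear_combination (-hh)
    · simp only [Prod.mk.injEq] at h
      obtain ⟨h0, h1, h2, h3, h4⟩ := h
      rw [h0, h1, h2, h3, h4]
      have hh := L24 hP hQ τ
      simp only [DD, MM, wedge, Prod.fst_sub, Prod.snd_sub] at hh ⊢
      linear_combination hh
    · simp only [Prod.mk.injEq] at h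
      obtain ⟨h0, h1, h2, h3, h4⟩ := h
      rw [h0, h1, h2, h3, h4]
      have hh := L14 hP hQ τ
      simp only [DD, MM, wedge, Prod.fst_sub, Prod.snd_sub] at hh ⊢
      linear_combination (-hh)
    · simp only [Prod.mk.injEq] at h
      obtain ⟨h0, h1, h2, h3, h4⟩ := h
      rw [h0, h1, h2, h3, h4]
      have hh := L12 hP hQ hΦ1 hΨ1 τ hMτ
      simp only [DD, MM, wedge, Prod.fst_sub, Prod.snd_sub] at hh ⊢
      linear_combination hh
    · simp only [Prod.mk.injEq] at h
      obtain ⟨h0, h1, h2, h3, h4⟩ := h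
      rw [h0, h1, h2, h3, h4]
      have hh := L23 hP hQ τ
      simp only [DD, MM, wedge, Prod.fst_sub, Prod.snd_sub] at hh ⊢
      linear_combination (-hh)
    · simp only [Prod.mk.injEq] at h
      obtain ⟨h0, h1, h2, h3, h4⟩ := h
      rw [h0, h1, h2, h3, h4]
      have hh := L13 hP hQ τ
      simp only [DD, MM, wedge, Prod.fst_sub, Prod.snd_sub] at hh ⊢
      linear_combination hh
    · simp only [Prod.mk.injEq] at h
      obtain ⟨h0, h1, h2, h3, h4⟩ := h
      rw [h0, h1, h2, h3, h4]
      have hh := L12 hP hQ hΦ1 hΨ1 τ hMτ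
      simp only [DD, MM, wedge, Prod.fst_sub, Prod.snd_sub] at hh ⊢
      linear_combination (-hh)
    · simp only [Prod.mk.injEq] at h
      obtain ⟨h0, h1, h2, h3, h4⟩ := h
      rw [h0, h1, h2, h3, h4]
      all_goals simp only [DD, MM, wedge, Prod.fst_sub, Prod.snd_sub]; ring
    · simp only [Prod.mk.injEq] at h
      obtain ⟨h0, h1, h2, h3, h4⟩ := h
      rw [h0, h1, h2, h3, h4]
      have hh := L24 hP hQ τ
      simp only [DD, MM, wedge, Prod.fst_sub, Prod.snd_sub] at hh ⊢
      linear_combination hh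
    · simp only [Prod.mk.injEq] at h
      obtain ⟨h0, h1, h2, h3, h4⟩ := h
      rw [h0, h1, h2, h3, h4]
      have hh := L23 hP hQ τ
      simp only [DD, MM, wedge, Prod.fst_sub, Prod.snd_sub] at hh ⊢
      linear_combination (-hh)
    · simp only [Prod.mk.injEq] at h
      obtain ⟨h0, h1, h2, h3, h4⟩ := h
      rw [h0, h1, h2, h3, h4]
      all_goals simp only [DD, MM, wedge, Prod.fst_sub, Prod.snd_sub]; ring
    · simp only [Prod.mk.injEq] at h
      obtain ⟨h0, h1, h2, h3, h4⟩ := h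
      rw [h0, h1, h2, h3, h4]
      have hh := L04 hP hQ τ
      simp only [DD, MM, wedge, Prod.fst_sub, Prod.snd_sub] at hh ⊢
      linear_combination (-hh)
    · simp only [Prod.mk.injEq] at h
      obtain ⟨h0, h1, h2, h3, h4⟩ := h
      rw [h0, h1, h2, h3, h4]
      have hh := L03 hP hQ τ
      simp only [DD, MM, wedge, Prod.fst_sub, Prod.snd_sub] at hh ⊢
      linear_combination hh
    · simp only [Prod.mk.injEq] at h
      obtain ⟨h0, h1, h2, h3, h4⟩ := h
      rw [h0, h1, h2, h3, h4]
      have hh := L24 hP hQ τ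
      simp only [DD, MM, wedge, Prod.fst_sub, Prod.snd_sub] at hh ⊢
      linear_combination (-hh)
    · simp only [Prod.mk.injEq] at h
      obtain ⟨h0, h1, h2, h3, h4⟩ := h
      rw [h0, h1, h2, h3, h4]
      have hh := L04 hP hQ τ
      simp only [DD, MM, wedge, Prod.fst_sub, Prod.snd_sub] at hh ⊢
      linear_combination hh
    · simp only [Prod.mk.injEq] at h
      obtain ⟨h0, h1, h2, h3, h4⟩ := h
      rw [h0, h1, h2, h3, h4]
      have hh := L02 hP hQ hΦ1 hΨ1 τ hMτ
      simp only [DD, MM, wedge, Prod.fst_sub, Prod.snd_sub] at hh ⊢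
      linear_combination (-hh)
    · simp only [Prod.mk.injEq] at h
      obtain ⟨h0, h1, h2, h3, h4⟩ := h
      rw [h0, h1, h2, h3, h4]
      have hh := L23 hP hQ τ
      simp only [DD, MM, wedge, Prod.fst_sub, Prod.snd_sub] at hh ⊢
      linear_combination hh
    · simp only [Prod.mk.injEq] at h
      obtain ⟨h0, h1, h2, h3, h4⟩ := h
      rw [h0, h1, h2, h3, h4]
      have hh := L03 hP hQ τ
      simp only [DD, MM, wedge, Prod.fst_sub, Prod.snd_sub] at hh ⊢
      linear_combination (-hh)
    · simp only [Prod.mk.injEq] at h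
      obtain ⟨h0, h1, h2, h3, h4⟩ := h
      rw [h0, h1, h2, h3, h4]
      have hh := L02 hP hQ hΦ1 hΨ1 τ hMτ
      simp only [DD, MM, wedge, Prod.fst_sub, Prod.snd_sub] at hh ⊢
      linear_combination hh
    · simp only [Prod.mk.injEq] at h
      obtain ⟨h0, h1, h2, h3, h4⟩ := h
      rw [h0, h1, h2, h3, h4]
      all_goals simp only [DD, MM, wedge, Prod.fst_sub, Prod.snd_sub]; ring
    · simp only [Prod.mk.injEq] at h
      obtain ⟨h0, h1, h2, h3, h4⟩ := h
      rw [h0, h1, h2, h3, h4]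
      have hh := L14 hP hQ τ
      simp only [DD, MM, wedge, Prod.fst_sub, Prod.snd_sub] at hh ⊢
      linear_combination (-hh)
    · simp only [Prod.mk.injEq] at h
      obtain ⟨h0, h1, h2, h3, h4⟩ := h
      rw [h0, h1, h2, h3, h4]
      have hh := L13 hP hQ τ
      simp only [DD, MM, wedge, Prod.fst_sub, Prod.snd_sub] at hh ⊢
      linear_combination hh
    · simp only [Prod.mk.injEq] at h
      obtain ⟨h0, h1, h2, h3, h4⟩ := h
      rw [h0, h1, h2, h3, h4]
      all_goals simp only [DD, MM, wedge, Prod.fst_sub, Prod.snd_sub]; ring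
    · simp only [Prod.mk.injEq] at h
      obtain ⟨h0, h1, h2, h3, h4⟩ := h
      rw [h0, h1, h2, h3, h4]
      have hh := L04 hP hQ τ
      simp only [DD, MM, wedge, Prod.fst_sub, Prod.snd_sub] at hh ⊢
      linear_combination hh
    · simp only [Prod.mk.injEq] at h
      obtain ⟨h0, h1, h2, h3, h4⟩ := h
      rw [h0, h1, h2, h3, h4]
      have hh := L03 hP hQ τ
      simp only [DD, MM, wedge, Prod.fst_sub, Prod.snd_sub] at hh ⊢
      linear_combination (-hh)
    · simp only [Prod.mk.injEq] at h
      obtain ⟨h0, h1, h2, h3, h4⟩ := h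
      rw [h0, h1, h2, h3, h4]
      have hh := L14 hP hQ τ
      simp only [DD, MM, wedge, Prod.fst_sub, Prod.snd_sub] at hh ⊢
      linear_combination hh
    · simp only [Prod.mk.injEq] at h
      obtain ⟨h0, h1, h2, h3, h4⟩ := h
      rw [h0, h1, h2, h3, h4]
      have hh := L04 hP hQ τ
      simp only [DD, MM, wedge, Prod.fst_sub, Prod.snd_sub] at hh ⊢
      linear_combination (-hh)
    · simp only [Prod.mk.injEq] at h
      obtain ⟨h0, h1, h2, h3, h4⟩ := h
      rw [h0, h1, h2, h3, h4]
      have hh := L01 hP hQ hΦ1 hΨ1 τ hMτ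
      simp only [DD, MM, wedge, Prod.fst_sub, Prod.snd_sub] at hh ⊢
      linear_combination hh
    · simp only [Prod.mk.injEq] at h
      obtain ⟨h0, h1, h2, h3, h4⟩ := h
      rw [h0, h1, h2, h3, h4]
      have hh := L13 hP hQ τ
      simp only [DD, MM, wedge, Prod.fst_sub, Prod.snd_sub] at hh ⊢
      linear_combination (-hh)
    · simp only [Prod.mk.injEq] at h
      obtain ⟨h0, h1, h2, h3, h4⟩ := h
      rw [h0, h1, h2, h3, h4]
      have hh := L03 hP hQ τ
      simp only [DD, MM, wedge, Prod.fst_sub, Prod.snd_sub] at hh ⊢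
      linear_combination hh
    · simp only [Prod.mk.injEq] at h
      obtain ⟨h0, h1, h2, h3, h4⟩ := h
      rw [h0, h1, h2, h3, h4]
      have hh := L01 hP hQ hΦ1 hΨ1 τ hMτ
      simp only [DD, MM, wedge, Prod.fst_sub, Prod.snd_sub] at hh ⊢
      linear_combination (-hh)
    · simp only [Prod.mk.injEq] at h
      obtain ⟨h0, h1, h2, h3, h4⟩ := h
      rw [h0, h1, h2, h3, h4]
      have hh := L24 hP hQ τ
      simp only [DD, MM, wedge, Prod.fst_sub, Prod.snd_sub] at hh ⊢
      linear_combination (-hh)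
    · simp only [Prod.mk.injEq] at h
      obtain ⟨h0, h1, h2, h3, h4⟩ := h
      rw [h0, h1, h2, h3, h4]
      have hh := L14 hP hQ τ
      simp only [DD, MM, wedge, Prod.fst_sub, Prod.snd_sub] at hh ⊢
      linear_combination hh
    · simp only [Prod.mk.injEq] at h
      obtain ⟨h0, h1, h2, h3, h4⟩ := h
      rw [h0, h1, h2, h3, h4]
      have hh := L12 hP hQ hΦ1 hΨ1 τ hMτ
      simp only [DD, MM, wedge, Prod.fst_sub, Prod.snd_sub] at hh ⊢
      linear_combination (-hh)
    · simp only [Prod.mk.injEq] at h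
      obtain ⟨h0, h1, h2, h3, h4⟩ := h
      rw [h0, h1, h2, h3, h4]
      have hh := L24 hP hQ τ
      simp only [DD, MM, wedge, Prod.fst_sub, Prod.snd_sub] at hh ⊢
      linear_combination hh
    · simp only [Prod.mk.injEq] at h
      obtain ⟨h0, h1, h2, h3, h4⟩ := h
      rw [h0, h1, h2, h3, h4]
      have hh := L04 hP hQ τ
      simp only [DD, MM, wedge, Prod.fst_sub, Prod.snd_sub] at hh ⊢
      linear_combination (-hh)
    · simp only [Prod.mk.injEq] at h
      obtain ⟨h0, h1, h2, h3, h4⟩ := h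
      rw [h0, h1, h2, h3, h4]
      have hh := L02 hP hQ hΦ1 hΨ1 τ hMτ
      simp only [DD, MM, wedge, Prod.fst_sub, Prod.snd_sub] at hh ⊢
      linear_combination hh
    · simp only [Prod.mk.injEq] at h
      obtain ⟨h0, h1, h2, h3, h4⟩ := h
      rw [h0, h1, h2, h3, h4]
      have hh := L14 hP hQ τ
      simp only [DD, MM, wedge, Prod.fst_sub, Prod.snd_sub] at hh ⊢
      linear_combination (-hh)
    · simp only [Prod.mk.injEq] at h
      obtain ⟨h0, h1, h2, h3, h4⟩ := h
      rw [h0, h1, h2, h3, h4]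
      have hh := L04 hP hQ τ
      simp only [DD, MM, wedge, Prod.fst_sub, Prod.snd_sub] at hh ⊢
      linear_combination hh
    · simp only [Prod.mk.injEq] at h
      obtain ⟨h0, h1, h2, h3, h4⟩ := h
      rw [h0, h1, h2, h3, h4]
      have hh := L01 hP hQ hΦ1 hΨ1 τ hMτ
      simp only [DD, MM, wedge, Prod.fst_sub, Prod.snd_sub] at hh ⊢
      linear_combination (-hh)
    · simp only [Prod.mk.injEq] at h
      obtain ⟨h0, h1, h2, h3, h4⟩ := h
      rw [h0, h1, h2, h3, h4]
      have hh := L12 hP hQ hΦ1 hΨ1 τ hMτ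
      simp only [DD, MM, wedge, Prod.fst_sub, Prod.snd_sub] at hh ⊢
      linear_combination hh
    · simp only [Prod.mk.injEq] at h
      obtain ⟨h0, h1, h2, h3, h4⟩ := h
      rw [h0, h1, h2, h3, h4]
      have hh := L02 hP hQ hΦ1 hΨ1 τ hMτ
      simp only [DD, MM, wedge, Prod.fst_sub, Prod.snd_sub] at hh ⊢
      linear_combination (-hh)
    · simp only [Prod.mk.injEq] at h
      obtain ⟨h0, h1, h2, h3, h4⟩ := h
      rw [h0, h1, h2, h3, h4]
      have hh := L01 hP hQ hΦ1 hΨ1 τ hMτ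
      simp only [DD, MM, wedge, Prod.fst_sub, Prod.snd_sub] at hh ⊢
      linear_combination hh
    · simp only [Prod.mk.injEq] at h
      obtain ⟨h0, h1, h2, h3, h4⟩ := h
      rw [h0, h1, h2, h3, h4]
      have hh := L23 hP hQ τ
      simp only [DD, MM, wedge, Prod.fst_sub, Prod.snd_sub] at hh ⊢
      linear_combination hh
    · simp only [Prod.mk.injEq] at h
      obtain ⟨h0, h1, h2, h3, h4⟩ := h
      rw [h0, h1, h2, h3, h4]
      have hh := L13 hP hQ τ
      simp only [DD, MM, wedge, Prod.fst_sub, Prod.snd_sub] at hh ⊢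
      linear_combination (-hh)
    · simp only [Prod.mk.injEq] at h
      obtain ⟨h0, h1, h2, h3, h4⟩ := h
      rw [h0, h1, h2, h3, h4]
      have hh := L12 hP hQ hΦ1 hΨ1 τ hMτ
      simp only [DD, MM, wedge, Prod.fst_sub, Prod.snd_sub] at hh ⊢
      linear_combination hh
    · simp only [Prod.mk.injEq] at h
      obtain ⟨h0, h1, h2, h3, h4⟩ := h
      rw [h0, h1, h2, h3, h4]
      have hh := L23 hP hQ τ
      simp only [DD, MM, wedge, Prod.fst_sub, Prod.snd_sub] at hh ⊢
      linear_combination (-hh)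
    · simp only [Prod.mk.injEq] at h
      obtain ⟨h0, h1, h2, h3, h4⟩ := h
      rw [h0, h1, h2, h3, h4]
      have hh := L03 hP hQ τ
      simp only [DD, MM, wedge, Prod.fst_sub, Prod.snd_sub] at hh ⊢
      linear_combination hh
    · simp only [Prod.mk.injEq] at h
      obtain ⟨h0, h1, h2, h3, h4⟩ := h
      rw [h0, h1, h2, h3, h4]
      have hh := L02 hP hQ hΦ1 hΨ1 τ hMτ
      simp only [DD, MM, wedge, Prod.fst_sub, Prod.snd_sub] at hh ⊢
      linear_combination (-hh)
    · simp only [Prod.mk.injEq] at h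
      obtain ⟨h0, h1, h2, h3, h4⟩ := h
      rw [h0, h1, h2, h3, h4]
      have hh := L13 hP hQ τ
      simp only [DD, MM, wedge, Prod.fst_sub, Prod.snd_sub] at hh ⊢
      linear_combination hh
    · simp only [Prod.mk.injEq] at h
      obtain ⟨h0, h1, h2, h3, h4⟩ := h
      rw [h0, h1, h2, h3, h4]
      have hh := L03 hP hQ τ
      simp only [DD, MM, wedge, Prod.fst_sub, Prod.snd_sub] at hh ⊢
      linear_combination (-hh)
    · simp only [Prod.mk.injEq] at h
      obtain ⟨h0, h1, h2, h3, h4⟩ := h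
      rw [h0, h1, h2, h3, h4]
      have hh := L01 hP hQ hΦ1 hΨ1 τ hMτ
      simp only [DD, MM, wedge, Prod.fst_sub, Prod.snd_sub] at hh ⊢
      linear_combination hh
    · simp only [Prod.mk.injEq] at h
      obtain ⟨h0, h1, h2, h3, h4⟩ := h
      rw [h0, h1, h2, h3, h4]
      have hh := L12 hP hQ hΦ1 hΨ1 τ hMτ
      simp only [DD, MM, wedge, Prod.fst_sub, Prod.snd_sub] at hh ⊢
      linear_combination (-hh)
    · simp only [Prod.mk.injEq] at h
      obtain ⟨h0, h1, h2, h3, h4⟩ := h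
      rw [h0, h1, h2, h3, h4]
      have hh := L02 hP hQ hΦ1 hΨ1 τ hMτ
      simp only [DD, MM, wedge, Prod.fst_sub, Prod.snd_sub] at hh ⊢
      linear_combination hh
    · simp only [Prod.mk.injEq] at h
      obtain ⟨h0, h1, h2, h3, h4⟩ := h
      rw [h0, h1, h2, h3, h4]
      have hh := L01 hP hQ hΦ1 hΨ1 τ hMτ
      simp only [DD, MM, wedge, Prod.fst_sub, Prod.snd_sub] at hh ⊢
      linear_combination (-hh)
  refine ⟨DD q (τ 0) (τ 1) (τ 2) / MM Φ Ψ (τ 3) (τ 4), ?_, ?_⟩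
  · -- a ≠ 0
    apply div_ne_zero _ hMτ
    -- find a nondegenerate triangle
    have hDex : ∃ i j k : Fin 5, DD q i j k ≠ 0 := by
      by_contra h
      push_neg at h
      apply hnc
      by_cases hall : ∀ m, q m = q 0
      · apply Collinear.subset _ (collinear_singleton (k := ℝ) (q 0))
        rintro p ⟨m, rfl⟩
        simp only [Set.mem_singleton_iff]
        exact hall m
      · push_neg at hall
        obtain ⟨m₀, hm₀⟩ := hall
        rw [collinear_iff_of_mem (Set.mem_range_self 0)]
        refine ⟨q m₀ - q 0, ?_⟩
        rintro p ⟨m, rfl⟩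
        have hw := h 0 m₀ m
        simp only [DD, wedge, Prod.fst_sub, Prod.snd_sub] at hw
        have hu : (q m₀).1 - (q 0).1 ≠ 0 ∨ (q m₀).2 - (q 0).2 ≠ 0 := by
          by_contra hc
          push_neg at hc
          apply hm₀
          have h1 : (q m₀).1 = (q 0).1 := by linarith [hc.1]
          have h2 : (q m₀).2 = (q 0).2 := by linarith [hc.2]
          exact Prod.ext h1 h2
        rcases hu with hu | hu
        · refine ⟨((q m).1 - (q 0).1) / ((q m₀).1 - (q 0).1), ?_⟩
          apply Prod.ext
          · simp only [vadd_eq_add, Prod.fst_add, Prod.smul_fst, Prod.fst_sub, smul_eq_mul]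
            field_simp
            ring
          · simp only [vadd_eq_add, Prod.snd_add, Prod.smul_snd, Prod.snd_sub, smul_eq_mul]
            field_simp
            nlinarith [hw]
        · refine ⟨((q m).2 - (q 0).2) / ((q m₀).2 - (q 0).2), ?_⟩
          apply Prod.ext
          · simp only [vadd_eq_add, Prod.fst_add, Prod.smul_fst, Prod.fst_sub, smul_eq_mul]
            field_simp
            nlinarith [hw]
          · simp only [vadd_eq_add, Prod.snd_add, Prod.smul_snd, Prod.snd_sub, smul_eq_mul]
            field_simp
            ring
    obtain ⟨i, j, k', hD⟩ := hDex
    have hij : i ≠ j := by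
      rintro rfl; apply hD
      simp only [DD, wedge, Prod.fst_sub, Prod.snd_sub]; ring
    have hik : i ≠ k' := by
      rintro rfl; apply hD
      simp only [DD, wedge, Prod.fst_sub, Prod.snd_sub]; ring
    have hjk : j ≠ k' := by
      rintro rfl; apply hD
      simp only [DD, wedge, Prod.fst_sub, Prod.snd_sub]; ring
    obtain ⟨σ₀, hσ₀s, h0, h1, h2⟩ := exEvenTriple i j k' hij hik hjk
    have hm := main σ₀ hσ₀s
    rw [h0, h1, h2] at hm
    intro hz
    apply mul_ne_zero hD hMτ
    rw [hm, hz, zero_mul]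
  · intro σ hσ
    have hm := main σ hσ
    show DD q (σ 0) (σ 1) (σ 2)
      = DD q (τ 0) (τ 1) (τ 2) / MM Φ Ψ (τ 3) (τ 4) * MM Φ Ψ (σ 3) (σ 4)
    rw [div_mul_eq_mul_div, eq_div_iff hMτ]
    linear_combination hm
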